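/- Let S be a 7-progression-free subset of F_7^2. If |S| = 35 then the number of affine lines ℓ of F_7^2 with |ℓ ∩ S| = 6 is at most 33; if |S| = 34 then this number is at most 30; and if |S| = 33 then this number is at most 28. -/

import Mathlib

/-- A subset `S` of `F_p^n` is `k`-progression-free if there are no `a, d` with `d ≠ 0`
such that `a + i • d ∈ S` for all `i ∈ {0, …, k-1}`. -/
def ProgFree (p n k : ℕ) (S : Finset (Fin n → ZMod p)) : Prop :=
  ¬ ∃ a d : Fin n → ZMod p, d ≠ 0 ∧ ∀ i : ℕ, i < k → a + (i : ZMod p) • d ∈ S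

/-- An affine line of `F_7^2`, as a finite set of points. -/
def IsLine (L : Finset (Fin 2 → ZMod 7)) : Prop :=
  ∃ a d : Fin 2 → ZMod 7, d ≠ 0 ∧
    L = Finset.image (fun t : ZMod 7 => a + t • d) Finset.univ

namespace Stmt12Aux

open Finset

instance fact7 : Fact (Nat.Prime 7) := ⟨by norm_num⟩

abbrev Pt : Type := Fin 2 → ZMod 7
abbrev Par : Type := Option (ZMod 7) × ZMod 7

def gfun : Option (ZMod 7) → ZMod 7 → ZMod 7 → ZMod 7
  | none, a, _ => a
  | some m, a, b => b - m * a

def lineP (p : Par) : Finset Pt := Finset.univ.filter (fun x => gfun p.1 (x 0) (x 1) = p.2)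

lemma mem_lineP {p : Par} {x : Pt} : x ∈ lineP p ↔ gfun p.1 (x 0) (x 1) = p.2 := by
  simp [lineP]

lemma pt_ext {x y : Pt} (h0 : x 0 = y 0) (h1 : x 1 = y 1) : x = y := by
  funext i; fin_cases i <;> assumption

lemma count_point (x : Pt) :
    ((Finset.univ : Finset Par).filter (fun p => x ∈ lineP p)).card = 8 := by
  rw [Finset.card_filter, Fintype.sum_prod_type]
  have inner : ∀ e : Option (ZMod 7),
      (∑ c : ZMod 7, if x ∈ lineP (e, c) then (1:ℕ) else 0) = 1 := by
    intro e
    simp only [mem_lineP]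
    rw [Finset.sum_ite_eq]
    simp
  rw [Finset.sum_congr rfl (fun e _ => inner e)]
  simp

lemma core_pair : ∀ a b c d : ZMod 7, (a ≠ c ∨ b ≠ d) →
    ((Finset.univ : Finset (Option (ZMod 7))).filter (fun e => gfun e a b = gfun e c d)).card = 1 := by
  decide

lemma count_pair {x y : Pt} (h : x ≠ y) :
    ((Finset.univ : Finset Par).filter (fun p => x ∈ lineP p ∧ y ∈ lineP p)).card = 1 := by
  have hxy : x 0 ≠ y 0 ∨ x 1 ≠ y 1 := by
    by_contra hc
    push_neg at hc
    exact h (pt_ext hc.1 hc.2)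
  rw [Finset.card_filter, Fintype.sum_prod_type]
  have inner : ∀ e : Option (ZMod 7),
      (∑ c : ZMod 7, if (x ∈ lineP (e, c) ∧ y ∈ lineP (e, c)) then (1:ℕ) else 0)
        = if gfun e (x 0) (x 1) = gfun e (y 0) (y 1) then 1 else 0 := by
    intro e
    simp only [mem_lineP]
    by_cases he : gfun e (x 0) (x 1) = gfun e (y 0) (y 1)
    · rw [if_pos he, ← he]
      simp only [and_self]
      rw [Finset.sum_ite_eq]
      simp
    · rw [if_neg he]
      apply Finset.sum_eq_zero
      intro c _
      rw [if_neg]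
      rintro ⟨h1, h2⟩
      exact he (h1.trans h2.symm)
  rw [Finset.sum_congr rfl (fun e _ => inner e), ← Finset.card_filter]
  exact core_pair _ _ _ _ hxy

lemma inj_core : ∀ (e e' : Option (ZMod 7)) (c c' : ZMod 7),
    (∀ a b : ZMod 7, (gfun e a b = c ↔ gfun e' a b = c')) → (e, c) = (e', c') := by
  decide

lemma lineP_injective : Function.Injective lineP := by
  rintro ⟨e, c⟩ ⟨e', c'⟩ h
  apply inj_core
  intro a b
  have := Finset.ext_iff.mp h ![a, b]
  simpa [mem_lineP] using this

lemma isLine_lineP (p : Par) : IsLine (lineP p) := by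
  obtain ⟨e, c⟩ := p
  match e with
  | none =>
    refine ⟨![c, 0], ![0, 1], ?_, ?_⟩
    · intro h
      have := congrFun h 1
      simp at this
    · ext x
      simp only [mem_lineP, Finset.mem_image, Finset.mem_univ, true_and]
      constructor
      · intro hx
        refine ⟨x 1, ?_⟩
        apply pt_ext <;> simp [gfun] at hx ⊢ <;> simp [hx]
      · rintro ⟨t, rfl⟩
        simp [gfun]
  | some m =>
    refine ⟨![0, c], ![1, m], ?_, ?_⟩
    · intro h
      have := congrFun h 0
      simp at this
    · ext x
      simp only [mem_lineP, Finset.mem_image, Finset.mem_univ, true_and]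
      constructor
      · intro hx
        refine ⟨x 0, ?_⟩
        apply pt_ext
        · simp
        · simp [gfun, sub_eq_iff_eq_add] at hx ⊢
          rw [hx]; ring
      · rintro ⟨t, rfl⟩
        simp [gfun]
        ring

lemma line_eq_lineP {a d : Pt} (hd : d ≠ 0) :
    ∃ p : Par, Finset.image (fun t : ZMod 7 => a + t • d) Finset.univ = lineP p := by
  by_cases hd0 : d 0 = 0
  · have hd1 : d 1 ≠ 0 := by
      intro h1
      exact hd (pt_ext hd0 h1)
    refine ⟨(none, a 0), ?_⟩
    ext x
    simp only [mem_lineP, Finset.mem_image, Finset.mem_univ, true_and, gfun]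
    constructor
    · rintro ⟨t, rfl⟩
      simp [hd0]
    · intro hx
      refine ⟨(x 1 - a 1) * (d 1)⁻¹, ?_⟩
      apply pt_ext
      · simp [hd0, hx]
      · simp
        field_simp
        ring
  · refine ⟨(some (d 1 * (d 0)⁻¹), a 1 - d 1 * (d 0)⁻¹ * a 0), ?_⟩
    ext x
    simp only [mem_lineP, Finset.mem_image, Finset.mem_univ, true_and, gfun]
    constructor
    · rintro ⟨t, rfl⟩
      simp
      field_simp
      ring
    · intro hx
      refine ⟨(x 0 - a 0) * (d 0)⁻¹, ?_⟩
      apply pt_ext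
      · simp
        field_simp
        ring
      · simp
        rw [eq_sub_iff_add_eq, eq_comm] at hx
        field_simp at hx ⊢
        linear_combination hx

lemma card_lineP (p : Par) : (lineP p).card = 7 := by
  obtain ⟨a, d, hd, hL⟩ := isLine_lineP p
  rw [hL]
  rw [Finset.card_image_of_injective _ ?_]
  · simp
  · intro t t' htt
    obtain ⟨i, hi⟩ := Function.ne_iff.mp hd
    have h2 := congrFun htt i
    simp only [Pi.add_apply, Pi.smul_apply, smul_eq_mul, add_right_inj] at h2
    exact mul_right_cancel₀ (by simpa using hi) h2

lemma inter_card_as_sum (T : Finset Pt) (p : Par) :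
    (lineP p ∩ T).card = ∑ t ∈ T, if t ∈ lineP p then 1 else 0 := by
  rw [← Finset.card_filter]
  congr 1
  rw [Finset.filter_mem_eq_inter, Finset.inter_comm]

lemma sum_r (T : Finset Pt) : ∑ p : Par, (lineP p ∩ T).card = 8 * T.card := by
  calc ∑ p : Par, (lineP p ∩ T).card
      = ∑ p : Par, ∑ t ∈ T, (if t ∈ lineP p then 1 else 0) := by
        exact Finset.sum_congr rfl (fun p _ => inter_card_as_sum T p)
    _ = ∑ t ∈ T, ∑ p : Par, (if t ∈ lineP p then 1 else 0) := Finset.sum_comm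
    _ = ∑ t ∈ T, 8 := by
        refine Finset.sum_congr rfl (fun t _ => ?_)
        rw [← Finset.card_filter]
        exact count_point t
    _ = 8 * T.card := by rw [Finset.sum_const, smul_eq_mul, mul_comm]

lemma offDiag_inter (T : Finset Pt) (p : Par) :
    (lineP p ∩ T).offDiag = T.offDiag.filter (fun q => q.1 ∈ lineP p ∧ q.2 ∈ lineP p) := by
  ext ⟨u, v⟩
  simp only [Finset.mem_offDiag, Finset.mem_inter, Finset.mem_filter]
  tauto

lemma sum_rr (T : Finset Pt) :
    ∑ p : Par, (lineP p ∩ T).offDiag.card = T.card * T.card - T.card := by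
  calc ∑ p : Par, (lineP p ∩ T).offDiag.card
      = ∑ p : Par, ∑ q ∈ T.offDiag, (if q.1 ∈ lineP p ∧ q.2 ∈ lineP p then 1 else 0) := by
        refine Finset.sum_congr rfl (fun p _ => ?_)
        rw [offDiag_inter, Finset.card_filter]
    _ = ∑ q ∈ T.offDiag, ∑ p : Par, (if q.1 ∈ lineP p ∧ q.2 ∈ lineP p then 1 else 0) :=
        Finset.sum_comm
    _ = ∑ q ∈ T.offDiag, 1 := by
        refine Finset.sum_congr rfl (fun q hq => ?_)
        rw [← Finset.card_filter]
        exact count_pair (Finset.mem_offDiag.mp hq).2.2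
    _ = T.card * T.card - T.card := by
        rw [Finset.sum_const, smul_eq_mul, mul_one, Finset.offDiag_card]

lemma card_Par : Fintype.card Par = 56 := by
  simp [Fintype.card_option]

lemma key_bound (T : Finset Pt) :
    4 * (((Finset.univ : Finset Par).filter (fun p => (lineP p ∩ T).card = 1)).card : ℤ)
      ≤ (T.card : ℤ)^2 - 41 * T.card + 504 := by
  set r : Par → ℕ := fun p => (lineP p ∩ T).card with hr
  have hsum1 : ∑ p : Par, (r p : ℤ) = 8 * T.card := by
    rw [← Nat.cast_sum, sum_r T]
    push_cast
    ring
  have hsum2 : ∑ p : Par, (r p : ℤ)^2 = (T.card : ℤ)^2 + 7 * T.card := by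
    have h1 : ∀ p : Par, r p * r p = (lineP p ∩ T).offDiag.card + r p := by
      intro p
      rw [Finset.offDiag_card]
      simp only [hr]
      have h : (lineP p ∩ T).card ≤ (lineP p ∩ T).card * (lineP p ∩ T).card := by nlinarith
      exact (Nat.sub_add_cancel h).symm
    have h2 : ∑ p : Par, r p * r p = (T.card * T.card - T.card) + 8 * T.card := by
      calc ∑ p : Par, r p * r p = ∑ p : Par, ((lineP p ∩ T).offDiag.card + r p) :=
            Finset.sum_congr rfl (fun p _ => h1 p)
        _ = (∑ p : Par, (lineP p ∩ T).offDiag.card) + ∑ p : Par, r p :=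
            Finset.sum_add_distrib
        _ = (T.card * T.card - T.card) + 8 * T.card := by rw [sum_rr, sum_r]
    have hle : T.card ≤ T.card * T.card := by nlinarith
    have h3 : (∑ p : Par, r p * r p : ℤ) = (T.card : ℤ)^2 + 7 * T.card := by
      have := congrArg (Nat.cast : ℕ → ℤ) h2
      push_cast [Nat.cast_sub hle] at this
      rw [this]; ring
    rw [← h3]
    exact Finset.sum_congr rfl (fun p _ => by ring)
  have hpt : ∀ p : Par, (if r p = 1 then (4:ℤ) else 0) ≤ ((r p : ℤ) - 3)^2 := by
    intro p
    by_cases h : r p = 1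
    · rw [if_pos h, h]
      norm_num
    · rw [if_neg h]
      positivity
  have hN : (((Finset.univ : Finset Par).filter (fun p => r p = 1)).card : ℤ)
      = ∑ p : Par, (if r p = 1 then (1:ℤ) else 0) := by
    rw [Finset.card_filter, Nat.cast_sum]
    refine Finset.sum_congr rfl (fun p _ => ?_)
    by_cases h : r p = 1 <;> simp [h]
  have hmain : 4 * (((Finset.univ : Finset Par).filter (fun p => r p = 1)).card : ℤ)
      ≤ ∑ p : Par, ((r p : ℤ) - 3)^2 := by
    rw [hN, Finset.mul_sum]
    refine Finset.sum_le_sum (fun p _ => ?_)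
    calc 4 * (if r p = 1 then (1:ℤ) else 0) = (if r p = 1 then (4:ℤ) else 0) := by
          by_cases h : r p = 1 <;> simp [h]
      _ ≤ ((r p : ℤ) - 3)^2 := hpt p
  have hexp : ∑ p : Par, ((r p : ℤ) - 3)^2 = (T.card : ℤ)^2 - 41 * T.card + 504 := by
    have e1 : ∑ p : Par, ((r p : ℤ) - 3)^2
        = ∑ p : Par, ((r p : ℤ)^2 - 6 * (r p : ℤ) + 9) :=
      Finset.sum_congr rfl (fun p _ => by ring)
    rw [e1, Finset.sum_add_distrib, Finset.sum_sub_distrib, Finset.sum_const,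
        ← Finset.mul_sum, hsum1, hsum2]
    rw [Finset.card_univ, card_Par]
    push_cast
    ring
  linarith [hmain, hexp.le, hexp.ge]

lemma card6_iff (S : Finset Pt) (p : Par) :
    (lineP p ∩ S).card = 6 ↔ (lineP p ∩ (Finset.univ \ S)).card = 1 := by
  have h1 : lineP p ∩ (Finset.univ \ S) = lineP p \ S := by
    ext x
    simp [Finset.mem_sdiff]
  have h2 : (lineP p ∩ S).card + (lineP p \ S).card = 7 := by
    rw [Finset.card_inter_add_card_sdiff, card_lineP]
  rw [h1]
  omega

end Stmt12Aux

open Stmt12Aux Finset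

theorem stmt_12 (S : Finset (Fin 2 → ZMod 7)) (hS : ProgFree 7 2 7 S) :
    (S.card = 35 →
      {L : Finset (Fin 2 → ZMod 7) | IsLine L ∧ (L ∩ S).card = 6}.ncard ≤ 33) ∧
    (S.card = 34 →
      {L : Finset (Fin 2 → ZMod 7) | IsLine L ∧ (L ∩ S).card = 6}.ncard ≤ 30) ∧
    (S.card = 33 →
      {L : Finset (Fin 2 → ZMod 7) | IsLine L ∧ (L ∩ S).card = 6}.ncard ≤ 28) := by
  set T : Finset Pt := Finset.univ \ S with hT
  set F : Finset Par := Finset.univ.filter (fun p => (lineP p ∩ T).card = 1) with hF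
  have hset : {L : Finset (Fin 2 → ZMod 7) | IsLine L ∧ (L ∩ S).card = 6}
      = ↑(F.image lineP) := by
    ext L
    simp only [Set.mem_setOf_eq, Finset.coe_image, Set.mem_image, Finset.mem_coe,
      hF, Finset.mem_filter, Finset.mem_univ, true_and]
    constructor
    · rintro ⟨⟨a, d, hd, rfl⟩, hc⟩
      obtain ⟨p, hp⟩ := line_eq_lineP hd
      refine ⟨p, ?_, hp.symm⟩
      rw [← (card6_iff S p), ← hp]
      exact hc
    · rintro ⟨p, hp1, rfl⟩
      exact ⟨isLine_lineP p, (card6_iff S p).mpr hp1⟩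
  have hncard : {L : Finset (Fin 2 → ZMod 7) | IsLine L ∧ (L ∩ S).card = 6}.ncard = F.card := by
    rw [hset, Set.ncard_coe_finset, Finset.card_image_of_injective _ lineP_injective]
  have huniv : (Finset.univ : Finset Pt).card = 49 := by
    rw [Finset.card_univ]
    simp [Fintype.card_fun]
  have hTcard : T.card = 49 - S.card := by
    rw [hT, Finset.card_sdiff_of_subset (Finset.subset_univ S), huniv]
  have hkey := key_bound T
  rw [← hF] at hkey
  refine ⟨fun h35 => ?_, fun h34 => ?_, fun h33 => ?_⟩
  · rw [hncard]
    have hm : T.card = 14 := by omega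
    rw [hm] at hkey
    norm_num at hkey
    omega
  · rw [hncard]
    have hm : T.card = 15 := by omega
    rw [hm] at hkey
    norm_num at hkey
    omega
  · rw [hncard]
    have hm : T.card = 16 := by omega
    rw [hm] at hkey
    norm_num at hkey
    omega
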